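/- Let θ > 0 and n ∈ ℕ, and let Z*_1, …, Z*_n be independent random variables with Z*_i Poisson distributed with mean θ/i. Then for every integer j with 0 ≤ j ≤ n, P[∑_{i=1}^n i·Z*_i ≤ j] ≤ ∏_{i=j+1}^n P[Z*_i = 0] = exp(−∑_{i=j+1}^n θ/i) ≤ ((j+1)/(n+1))^θ. -/

import Mathlib

open MeasureTheory ProbabilityTheory Finset

lemma log_telescope (j : ℕ) : ∀ n, j ≤ n →
    Real.log ((n : ℝ) + 1) - Real.log ((j : ℝ) + 1) ≤ ∑ i ∈ Icc (j + 1) n, 1 / (i : ℝ) := by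
  intro n
  induction n with
  | zero => intro h; interval_cases j; simp
  | succ m ih =>
    intro h
    rcases Nat.lt_or_ge j (m + 1) with hlt | hge
    · have hjm : j ≤ m := by omega
      have hstep : Real.log ((m : ℝ) + 1 + 1) - Real.log ((m : ℝ) + 1) ≤ 1 / ((m : ℝ) + 1) := by
        have hpos : (0 : ℝ) < (m : ℝ) + 1 := by positivity
        have hpos2 : (0 : ℝ) < ((m : ℝ) + 1 + 1) / ((m : ℝ) + 1) := by positivity
        have := Real.log_le_sub_one_of_pos hpos2
        rw [Real.log_div (by positivity) (by positivity)] at this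
        have heq : ((m : ℝ) + 1 + 1) / ((m : ℝ) + 1) - 1 = 1 / ((m : ℝ) + 1) := by
          field_simp
          ring
        linarith [this, heq ▸ this]
      have hsum : ∑ i ∈ Icc (j + 1) (m + 1), 1 / (i : ℝ)
          = (∑ i ∈ Icc (j + 1) m, 1 / (i : ℝ)) + 1 / ((m : ℝ) + 1) := by
        rw [Finset.sum_Icc_succ_top (by omega)]
        push_cast
        ring
      have := ih hjm
      rw [hsum]
      push_cast
      linarith
    · have hj : j = m + 1 := by omega
      subst hj
      simp
/-- Display (3.13): for independent `Z*_i ~ Poisson(θ/i)`, `1 ≤ i ≤ n`, and `0 ≤ j ≤ n`,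
`P[∑ i Z*_i ≤ j] ≤ ∏_{i=j+1}^n P[Z*_i = 0] = exp(−∑_{i=j+1}^n θ/i) ≤ ((j+1)/(n+1))^θ`. -/
theorem stmt9 {Ω : Type*} [MeasurableSpace Ω] (P : Measure Ω) [IsProbabilityMeasure P]
    (θ : NNReal) (hθ : 0 < θ) (n : ℕ) (hn : 1 ≤ n)
    (Z : ℕ → Ω → ℕ) (hZm : ∀ i, Measurable (Z i))
    (hind : iIndepFun Z P)
    (hpois : ∀ i ∈ Icc 1 n, Measure.map (Z i) P = poissonMeasure (θ / (i : NNReal)))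
    (j : ℕ) (hj : j ≤ n) :
    (P {ω | ∑ i ∈ Icc 1 n, i * Z i ω ≤ j}).toReal ≤
        ∏ i ∈ Icc (j + 1) n, (P {ω | Z i ω = 0}).toReal ∧
      ∏ i ∈ Icc (j + 1) n, (P {ω | Z i ω = 0}).toReal
        = Real.exp (-∑ i ∈ Icc (j + 1) n, (θ : ℝ) / i) ∧
      Real.exp (-∑ i ∈ Icc (j + 1) n, (θ : ℝ) / i) ≤
        (((j : ℝ) + 1) / ((n : ℝ) + 1)) ^ (θ : ℝ) := by
  have hsub : Icc (j + 1) n ⊆ Icc 1 n := fun i hi => by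
    simp only [mem_Icc] at *; omega
  -- value of P {Z i = 0}
  have hP0 : ∀ i ∈ Icc (j + 1) n,
      (P {ω | Z i ω = 0}).toReal = Real.exp (-((θ : ℝ) / i)) := by
    intro i hi
    have hi' := hsub hi
    have hset : {ω | Z i ω = 0} = Z i ⁻¹' {0} := rfl
    rw [hset, ← Measure.map_apply (hZm i) (measurableSet_singleton 0), hpois i hi',
      poissonMeasure_singleton, ENNReal.toReal_ofReal (by positivity)]
    simp [NNReal.coe_div]
  -- Part 1
  have part1 : (P {ω | ∑ i ∈ Icc 1 n, i * Z i ω ≤ j}).toReal ≤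
      ∏ i ∈ Icc (j + 1) n, (P {ω | Z i ω = 0}).toReal := by
    have hincl : {ω | ∑ i ∈ Icc 1 n, i * Z i ω ≤ j} ⊆
        ⋂ i ∈ Icc (j + 1) n, {ω | Z i ω = 0} := by
      intro ω hω
      simp only [Set.mem_iInter, Set.mem_setOf_eq]
      intro i hi
      simp only [mem_Icc] at hi
      by_contra hne
      have hZ1 : 1 ≤ Z i ω := Nat.one_le_iff_ne_zero.mpr hne
      have hle : i * Z i ω ≤ ∑ k ∈ Icc 1 n, k * Z k ω :=
        Finset.single_le_sum (f := fun k => k * Z k ω) (fun k _ => Nat.zero_le _) (hsub (mem_Icc.mpr hi))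
      have : i ≤ i * Z i ω := Nat.le_mul_of_pos_right i hZ1
      have hωj := hω
      simp only [Set.mem_setOf_eq] at hωj
      omega
    have hmeas : P (⋂ i ∈ Icc (j + 1) n, {ω | Z i ω = 0})
        = ∏ i ∈ Icc (j + 1) n, P {ω | Z i ω = 0} := by
      refine hind.meas_biInter (fun i _ => ?_)
      exact ⟨{0}, measurableSet_singleton 0, rfl⟩
    calc (P {ω | ∑ i ∈ Icc 1 n, i * Z i ω ≤ j}).toReal
        ≤ (P (⋂ i ∈ Icc (j + 1) n, {ω | Z i ω = 0})).toReal := by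
          apply ENNReal.toReal_mono (measure_ne_top _ _)
          exact measure_mono hincl
      _ = (∏ i ∈ Icc (j + 1) n, P {ω | Z i ω = 0}).toReal := by rw [hmeas]
      _ = ∏ i ∈ Icc (j + 1) n, (P {ω | Z i ω = 0}).toReal := ENNReal.toReal_prod _ _
  -- Part 2
  have part2 : ∏ i ∈ Icc (j + 1) n, (P {ω | Z i ω = 0}).toReal
      = Real.exp (-∑ i ∈ Icc (j + 1) n, (θ : ℝ) / i) := by
    rw [Finset.prod_congr rfl hP0, ← Real.exp_sum, ← Finset.sum_neg_distrib]
  -- Part 3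
  have part3 : Real.exp (-∑ i ∈ Icc (j + 1) n, (θ : ℝ) / i) ≤
      (((j : ℝ) + 1) / ((n : ℝ) + 1)) ^ (θ : ℝ) := by
    have hlog := log_telescope j n hj
    have hsum : ∑ i ∈ Icc (j + 1) n, (θ : ℝ) / i
        = (θ : ℝ) * ∑ i ∈ Icc (j + 1) n, 1 / (i : ℝ) := by
      rw [Finset.mul_sum]
      refine Finset.sum_congr rfl fun i _ => ?_
      ring
    have hratio : (0 : ℝ) < ((j : ℝ) + 1) / ((n : ℝ) + 1) := by positivity
    rw [Real.rpow_def_of_pos hratio,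
      Real.log_div (by positivity) (by positivity)]
    apply Real.exp_le_exp.mpr
    rw [hsum]
    have hθ' : (0 : ℝ) ≤ (θ : ℝ) := θ.coe_nonneg
    nlinarith [hlog, hθ']
  exact ⟨part1, part2, part3⟩
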